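/- Let ρ be a representation of a finite-dimensional Lie algebra g and define the bilinear form C_ρ on A(g) by C_ρ(X,Y) = -½(B_ρ(x₁,y₁) + B_ρ(x₂,y₂) + B_ρ(x₃,y₃)), where B_ρ(x,y) = tr(ρ(x)ρ(y)). Then C_ρ is invariant on the Nahm algebra: C_ρ(X·Y, Z) = C_ρ(X, Y·Z) for all X, Y, Z ∈ A(g). -/

import Mathlib

attribute [local instance 100] LieRing.ofAssociativeRing

def nahmMul (𝕜 : Type*) [RCLike 𝕜] {L : Type*} [LieRing L] [LieAlgebra 𝕜 L]
    (X Y : Fin 3 → L) : Fin 3 → L :=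
  fun i => (2 : 𝕜)⁻¹ • (⁅X (i + 1), Y (i + 2)⁆ + ⁅Y (i + 1), X (i + 2)⁆)

/-- The trace form `B_ρ(x, y) = tr (ρ x ∘ ρ y)` of a representation `ρ`. -/
noncomputable def traceFormB (𝕜 : Type*) [RCLike 𝕜] {L V : Type*} [LieRing L] [LieAlgebra 𝕜 L]
    [AddCommGroup V] [Module 𝕜 V] (ρ : L →ₗ⁅𝕜⁆ Module.End 𝕜 V) (x y : L) : 𝕜 :=
  LinearMap.trace 𝕜 V (ρ x ∘ₗ ρ y)

/-- The induced trace form `C_ρ(X, Y) = -½ ∑ᵢ B_ρ(xᵢ, yᵢ)` on the Nahm algebra. -/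
noncomputable def nahmFormC (𝕜 : Type*) [RCLike 𝕜] {L V : Type*} [LieRing L] [LieAlgebra 𝕜 L]
    [AddCommGroup V] [Module 𝕜 V] (ρ : L →ₗ⁅𝕜⁆ Module.End 𝕜 V) (X Y : Fin 3 → L) : 𝕜 :=
  -(2 : 𝕜)⁻¹ * ∑ i : Fin 3, traceFormB 𝕜 ρ (X i) (Y i)

section Aux

set_option linter.unusedSectionVars false

variable {𝕜 : Type*} [RCLike 𝕜] {L V : Type*} [LieRing L] [LieAlgebra 𝕜 L]
    [AddCommGroup V] [Module 𝕜 V] [FiniteDimensional 𝕜 V]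
    (ρ : L →ₗ⁅𝕜⁆ Module.End 𝕜 V)

lemma B_symm (x y : L) : traceFormB 𝕜 ρ x y = traceFormB 𝕜 ρ y x := by
  unfold traceFormB
  exact LinearMap.trace_mul_comm 𝕜 (ρ x) (ρ y)

lemma B_lie (x y z : L) : traceFormB 𝕜 ρ ⁅x, y⁆ z = traceFormB 𝕜 ρ x ⁅y, z⁆ := by
  unfold traceFormB
  have hxy : ρ ⁅x, y⁆ = ρ x * ρ y - ρ y * ρ x := by
    rw [LieHom.map_lie]; rfl
  have hyz : ρ ⁅y, z⁆ = ρ y * ρ z - ρ z * ρ y := by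
    rw [LieHom.map_lie]; rfl
  show LinearMap.trace 𝕜 V (ρ ⁅x,y⁆ * ρ z) = LinearMap.trace 𝕜 V (ρ x * ρ ⁅y,z⁆)
  rw [hxy, hyz, sub_mul, mul_sub, map_sub, map_sub, mul_assoc, mul_assoc]
  congr 1
  rw [LinearMap.trace_mul_comm 𝕜 (ρ y) (ρ x * ρ z), mul_assoc]

lemma B_add_left (x y z : L) :
    traceFormB 𝕜 ρ (x + y) z = traceFormB 𝕜 ρ x z + traceFormB 𝕜 ρ y z := by
  unfold traceFormB; rw [map_add ρ, LinearMap.add_comp, map_add]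

lemma B_smul_left (c : 𝕜) (x z : L) :
    traceFormB 𝕜 ρ (c • x) z = c * traceFormB 𝕜 ρ x z := by
  unfold traceFormB; rw [map_smul ρ, LinearMap.smul_comp, map_smul]; rfl

lemma B_add_right (x y z : L) :
    traceFormB 𝕜 ρ x (y + z) = traceFormB 𝕜 ρ x y + traceFormB 𝕜 ρ x z := by
  unfold traceFormB; rw [map_add ρ, LinearMap.comp_add, map_add]

lemma B_smul_right (c : 𝕜) (x z : L) :
    traceFormB 𝕜 ρ x (c • z) = c * traceFormB 𝕜 ρ x z := by
  unfold traceFormB; rw [map_smul ρ, LinearMap.comp_smul, map_smul]; rfl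

end Aux

theorem nahm_form_invariant (𝕜 : Type*) [RCLike 𝕜] (L : Type*) [LieRing L] [LieAlgebra 𝕜 L]
    (V : Type*) [AddCommGroup V] [Module 𝕜 V] [FiniteDimensional 𝕜 V]
    (ρ : L →ₗ⁅𝕜⁆ Module.End 𝕜 V) (X Y Z : Fin 3 → L) :
    nahmFormC 𝕜 ρ (nahmMul 𝕜 X Y) Z = nahmFormC 𝕜 ρ X (nahmMul 𝕜 Y Z) := by
  simp only [nahmFormC, nahmMul, Fin.sum_univ_three, B_smul_left, B_smul_right,
    B_add_left, B_add_right]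
  norm_num
  have e3 : (3 : Fin 3) = 0 := rfl
  have e4 : (4 : Fin 3) = 1 := rfl
  rw [show (1 + 1 : Fin 3) = 2 from rfl, show (1 + 2 : Fin 3) = 0 from rfl,
    show (2 + 1 : Fin 3) = 0 from rfl, show (2 + 2 : Fin 3) = 1 from rfl]
  have h1 := B_lie ρ (X 1) (Y 2) (Z 0)
  have h2 := B_lie ρ (X 2) (Y 0) (Z 1)
  have h3 := B_lie ρ (X 0) (Y 1) (Z 2)
  have h4 : traceFormB 𝕜 ρ ⁅Y 1, X 2⁆ (Z 0) = traceFormB 𝕜 ρ (X 2) ⁅Z 0, Y 1⁆ := by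
    rw [B_lie, B_symm, B_lie]
  have h5 : traceFormB 𝕜 ρ ⁅Y 2, X 0⁆ (Z 1) = traceFormB 𝕜 ρ (X 0) ⁅Z 1, Y 2⁆ := by
    rw [B_lie, B_symm, B_lie]
  have h6 : traceFormB 𝕜 ρ ⁅Y 0, X 1⁆ (Z 2) = traceFormB 𝕜 ρ (X 1) ⁅Z 2, Y 0⁆ := by
    rw [B_lie, B_symm, B_lie]
  linear_combination (1/2 : 𝕜) * (h1 + h2 + h3 + h4 + h5 + h6)
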